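/- Let M be a von Neumann algebra, T ∈ M dominated by a gauge p, and L a Banach limit. If A, B ∈ M commute with T, then E_{L,T}(A* X B) = A* E_{L,T}(X) B for all X ∈ M. -/

import Mathlib

noncomputable section

/-- A complex sequence is bounded. -/
def IsBoundedSeq (u : ℕ → ℂ) : Prop := ∃ C : ℝ, ∀ n, ‖u n‖ ≤ C

/-- Almost convergence (Lorentz) of a complex sequence: the Cesàro averages
`(1/(n+1)) ∑_{i=k}^{k+n} u i` converge to `c` uniformly in `k`. -/
def AlmostConvergentC (u : ℕ → ℂ) (c : ℂ) : Prop :=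
  ∀ ε : ℝ, 0 < ε → ∃ N : ℕ, ∀ n ≥ N, ∀ k : ℕ,
    ‖(∑ i ∈ Finset.range (n + 1), u (k + i)) / ((n : ℂ) + 1) - c‖ < ε

/-- Almost convergence (Lorentz) of a real sequence. -/
def AlmostConvergentR (u : ℕ → ℝ) (c : ℝ) : Prop :=
  ∀ ε : ℝ, 0 < ε → ∃ N : ℕ, ∀ n ≥ N, ∀ k : ℕ,
    |(∑ i ∈ Finset.range (n + 1), u (k + i)) / ((n : ℝ) + 1) - c| < ε

/-- A Banach limit: a shift-invariant positive linear functional on `ℓ^∞(ℕ, ℂ)`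
with `L(1) = 1 = ‖L‖`. -/
structure BanachLimit where
  toFun : (ℕ → ℂ) → ℂ
  map_add' : ∀ u v : ℕ → ℂ, IsBoundedSeq u → IsBoundedSeq v →
    toFun (u + v) = toFun u + toFun v
  map_smul' : ∀ (a : ℂ) (u : ℕ → ℂ), IsBoundedSeq u → toFun (a • u) = a * toFun u
  norm_le' : ∀ (u : ℕ → ℂ) (C : ℝ), (∀ n, ‖u n‖ ≤ C) → ‖toFun u‖ ≤ C
  map_one' : toFun (fun _ => 1) = 1
  shift' : ∀ u : ℕ → ℂ, IsBoundedSeq u → toFun (fun n => u (n + 1)) = toFun u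
  pos' : ∀ u : ℕ → ℂ, (∀ n, ∃ r : ℝ, 0 ≤ r ∧ u n = (r : ℂ)) →
    ∃ r : ℝ, 0 ≤ r ∧ toFun u = (r : ℂ)

/-- A gauge with constant `c`: `p : ℕ → (0,∞)` with `p(n+1)/p(n)` strongly almost
convergent to `c > 0`. -/
def IsGauge (p : ℕ → ℝ) (c : ℝ) : Prop :=
  (∀ n, 0 < p n) ∧ 0 < c ∧ AlmostConvergentR (fun n => |p (n + 1) / p n - c|) 0

variable {H : Type*} [NormedAddCommGroup H] [InnerProductSpace ℂ H] [CompleteSpace H]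

/-- Positivity of a matrix of operators `[A i j]` acting on `H ⊕ ⋯ ⊕ H`. -/
def MatrixIsPos {k : ℕ} (A : Matrix (Fin k) (Fin k) (H →L[ℂ] H)) : Prop :=
  ∀ x : Fin k → H, ∃ r : ℝ, 0 ≤ r ∧
    (∑ i, ∑ j, (inner ℂ (x i) (A i j (x j)) : ℂ)) = (r : ℂ)

/-- Ultraweak (σ-weak) continuity of a functional on `B(H)`:
`l(A) = ∑ ⟨A xᵢ, yᵢ⟩` with `∑ ‖xᵢ‖² < ∞`, `∑ ‖yᵢ‖² < ∞`. -/
def UWContinuousFunctional (l : (H →L[ℂ] H) → ℂ) : Prop :=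
  ∃ x y : ℕ → H, Summable (fun i => ‖x i‖ ^ 2) ∧ Summable (fun i => ‖y i‖ ^ 2) ∧
    ∀ A : H →L[ℂ] H, HasSum (fun i => (inner ℂ (y i) (A (x i)) : ℂ)) (l A)

/-- `τ` is a faithful normal trace on the von Neumann algebra `M`. -/
def IsFiniteTrace (M : VonNeumannAlgebra H) (τ : (H →L[ℂ] H) →ₗ[ℂ] ℂ) : Prop :=
  (∀ A ∈ M, ∀ B ∈ M, τ (A * B) = τ (B * A)) ∧
  (∀ A ∈ M, A.IsPositive → ∃ r : ℝ, 0 ≤ r ∧ τ A = (r : ℂ)) ∧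
  (∀ A ∈ M, A.IsPositive → τ A = 0 → A = 0) ∧
  UWContinuousFunctional (fun A => τ A)

/-- If `A, B ∈ M` commute with `T`, then `E_{L,T}(A* X B) = A* E_{L,T}(X) B`. -/
theorem E_LT_bimodule
    {H : Type*} [NormedAddCommGroup H] [InnerProductSpace ℂ H] [CompleteSpace H]
    (M : VonNeumannAlgebra H) (T : H →L[ℂ] H) (hT : T ∈ M)
    (p : ℕ → ℝ) (c : ℝ) (hp : IsGauge p c)
    (hdom : ∀ n : ℕ, 1 ≤ n → ‖T ^ n‖ ≤ p n)
    (L : BanachLimit)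
    (E : (H →L[ℂ] H) → (H →L[ℂ] H))
    (hE : ∀ (X : H →L[ℂ] H) (x y : H),
      (inner ℂ y (E X x) : ℂ) =
        L.toFun (fun n => (inner ℂ ((T ^ n) y) (X ((T ^ n) x)) : ℂ) / ((p n : ℂ) ^ 2)))
    (A B : H →L[ℂ] H) (hA : A ∈ M) (hB : B ∈ M)
    (hAT : A * T = T * A) (hBT : B * T = T * B) :
    ∀ X ∈ M, E (star A * X * B) = star A * E X * B := by
  intro X _
  have hAn : ∀ n, A * T ^ n = T ^ n * A := fun n => (Commute.pow_right hAT n)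
  have hBn : ∀ n, B * T ^ n = T ^ n * B := fun n => (Commute.pow_right hBT n)
  ext x
  apply ext_inner_left ℂ
  intro y
  have hrhs : (inner ℂ y ((star A * E X * B) x) : ℂ) = inner ℂ (A y) ((E X) (B x)) := by
    simp [ContinuousLinearMap.mul_apply, ContinuousLinearMap.star_eq_adjoint,
      ContinuousLinearMap.adjoint_inner_right]
  rw [hE, hrhs, hE]
  congr 1
  funext n
  congr 1
  have h1 : (T ^ n) (A y) = A ((T ^ n) y) := by
    have := congrArg (fun S : H →L[ℂ] H => S y) (hAn n)
    simpa using this.symm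
  have h2 : (T ^ n) (B x) = B ((T ^ n) x) := by
    have := congrArg (fun S : H →L[ℂ] H => S x) (hBn n)
    simpa using this.symm
  rw [h1, h2]
  simp [ContinuousLinearMap.mul_apply, ContinuousLinearMap.star_eq_adjoint,
    ContinuousLinearMap.adjoint_inner_right]
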